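/- Let A be a unital C*-algebra over ℂ and ω : A → ℂ a state. Suppose (π₁, H₁, Ω₁) and (π₂, H₂, Ω₂) are two cyclic representations of ω: for i = 1, 2, Hᵢ is a complex Hilbert space, πᵢ : A → B(Hᵢ) is a unital star-algebra homomorphism, Ωᵢ ∈ Hᵢ is a unit vector cyclic for πᵢ, and ω(a) = ⟨Ωᵢ, πᵢ(a)Ωᵢ⟩ for all a ∈ A. Then there exists a unitary operator U : H₁ → H₂ with U Ω₁ = Ω₂ and U π₁(a) = π₂(a) U for all a ∈ A. -/

import Mathlib

open scoped ComplexOrder InnerProductSpace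

/-- **The GNS construction (uniqueness).**
If `(π₁, H₁, Ω₁)` and `(π₂, H₂, Ω₂)` are two cyclic representations of the same state `ω`
on a unital C*-algebra `A`, then there is a unitary `U : H₁ → H₂` (a surjective linear
isometry) with `U Ω₁ = Ω₂` and `U ∘ π₁ a = π₂ a ∘ U` for all `a ∈ A`. -/
theorem gns_uniqueness {A : Type*} [CStarAlgebra A]
    (ω : A →L[ℂ] ℂ) (hω1 : ω 1 = 1) (hωpos : ∀ a : A, 0 ≤ ω (star a * a))
    {H₁ : Type*} [NormedAddCommGroup H₁] [InnerProductSpace ℂ H₁] [CompleteSpace H₁]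
    {H₂ : Type*} [NormedAddCommGroup H₂] [InnerProductSpace ℂ H₂] [CompleteSpace H₂]
    (π₁ : A →⋆ₐ[ℂ] (H₁ →L[ℂ] H₁)) (π₂ : A →⋆ₐ[ℂ] (H₂ →L[ℂ] H₂))
    (Ω₁ : H₁) (Ω₂ : H₂) (hΩ₁ : ‖Ω₁‖ = 1) (hΩ₂ : ‖Ω₂‖ = 1)
    (hcyc₁ : Dense ((Submodule.span ℂ (Set.range fun a : A => π₁ a Ω₁) : Submodule ℂ H₁) : Set H₁))
    (hcyc₂ : Dense ((Submodule.span ℂ (Set.range fun a : A => π₂ a Ω₂) : Submodule ℂ H₂) : Set H₂))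
    (hω₁ : ∀ a : A, ω a = ⟪Ω₁, π₁ a Ω₁⟫_ℂ)
    (hω₂ : ∀ a : A, ω a = ⟪Ω₂, π₂ a Ω₂⟫_ℂ) :
    ∃ U : H₁ ≃ₗᵢ[ℂ] H₂, U Ω₁ = Ω₂ ∧ ∀ (a : A) (x : H₁), U (π₁ a x) = π₂ a (U x) := by
  classical
  -- the two "orbit" linear maps
  let φ₁ : A →ₗ[ℂ] H₁ :=
    { toFun := fun a => π₁ a Ω₁
      map_add' := fun a b => by simp [map_add]
      map_smul' := fun c a => by simp [map_smul] }
  let φ₂ : A →ₗ[ℂ] H₂ :=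
    { toFun := fun a => π₂ a Ω₂
      map_add' := fun a b => by simp [map_add]
      map_smul' := fun c a => by simp [map_smul] }
  have hφ₁ : ∀ a : A, φ₁ a = π₁ a Ω₁ := fun _ => rfl
  have hφ₂ : ∀ a : A, φ₂ a = π₂ a Ω₂ := fun _ => rfl
  -- inner products are given by ω
  have hinner₁ : ∀ a b : A, ⟪φ₁ a, φ₁ b⟫_ℂ = ω (star a * b) := by
    intro a b
    rw [hω₁, map_mul, map_star, ContinuousLinearMap.mul_apply,
      ContinuousLinearMap.star_eq_adjoint, ContinuousLinearMap.adjoint_inner_right]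
    rfl
  have hinner₂ : ∀ a b : A, ⟪φ₂ a, φ₂ b⟫_ℂ = ω (star a * b) := by
    intro a b
    rw [hω₂, map_mul, map_star, ContinuousLinearMap.mul_apply,
      ContinuousLinearMap.star_eq_adjoint, ContinuousLinearMap.adjoint_inner_right]
    rfl
  have hnorm : ∀ a : A, ‖φ₁ a‖ = ‖φ₂ a‖ := by
    intro a
    rw [@norm_eq_sqrt_re_inner ℂ, @norm_eq_sqrt_re_inner ℂ, hinner₁, hinner₂]
  -- kernels agree
  have hker : LinearMap.ker φ₁ ≤ LinearMap.ker φ₂ := by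
    intro a ha
    rw [LinearMap.mem_ker] at ha ⊢
    rw [← norm_eq_zero, ← hnorm, ha, norm_zero]
  -- the dense subspaces are the ranges of φᵢ
  have hD₁ : (Submodule.span ℂ (Set.range fun a : A => π₁ a Ω₁) : Submodule ℂ H₁)
      = LinearMap.range φ₁ := by
    have : (Set.range fun a : A => π₁ a Ω₁) = ↑(LinearMap.range φ₁) :=
      (LinearMap.coe_range φ₁).symm
    rw [this, Submodule.span_eq]
  have hD₂ : (Submodule.span ℂ (Set.range fun a : A => π₂ a Ω₂) : Submodule ℂ H₂)
      = LinearMap.range φ₂ := by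
    have : (Set.range fun a : A => π₂ a Ω₂) = ↑(LinearMap.range φ₂) :=
      (LinearMap.coe_range φ₂).symm
    rw [this, Submodule.span_eq]
  rw [hD₁] at hcyc₁
  rw [hD₂] at hcyc₂
  set D₁ : Submodule ℂ H₁ := LinearMap.range φ₁ with hD₁def
  -- the densely defined intertwiner
  let T : D₁ →ₗ[ℂ] H₂ :=
    ((LinearMap.ker φ₁).liftQ φ₂ hker).comp (φ₁.quotKerEquivRange).symm.toLinearMap
  have hT : ∀ a : A, T ⟨φ₁ a, LinearMap.mem_range_self φ₁ a⟩ = φ₂ a := by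
    intro a
    have := LinearMap.quotKerEquivRange_symm_apply_image φ₁ a (LinearMap.mem_range_self φ₁ a)
    simp only [T, LinearMap.comp_apply, LinearEquiv.coe_toLinearMap, this]
    exact Submodule.liftQ_apply _ _ _
  have hTnorm : ∀ x : D₁, ‖T x‖ = ‖(x : H₁)‖ := by
    rintro ⟨x, a, rfl⟩
    rw [hT a, ← hnorm]
  -- extend to all of H₁
  let Tc : D₁ →L[ℂ] H₂ := (⟨T, hTnorm⟩ : D₁ →ₗᵢ[ℂ] H₂).toContinuousLinearMap
  let e : D₁ →L[ℂ] H₁ := D₁.subtypeL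
  have he_dense : DenseRange e := by
    have : Set.range e = (D₁ : Set H₁) := Subtype.range_coe
    rw [DenseRange, this]; exact hcyc₁
  have he_ui : IsUniformInducing e := isometry_subtype_coe.isUniformInducing
  let U₀ : H₁ →L[ℂ] H₂ := Tc.extend e
  have hU₀e : ∀ x : D₁, U₀ (x : H₁) = T x := fun x =>
    ContinuousLinearMap.extend_eq Tc he_dense he_ui x
  have hU₀φ : ∀ a : A, U₀ (φ₁ a) = φ₂ a := by
    intro a
    rw [show φ₁ a = ((⟨φ₁ a, LinearMap.mem_range_self φ₁ a⟩ : D₁) : H₁) from rfl,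
      hU₀e, hT]
  -- U₀ is an isometry
  have hU₀norm : ∀ y : H₁, ‖U₀ y‖ = ‖y‖ := by
    intro y
    refine he_dense.induction_on y ?_ ?_
    · exact isClosed_eq (continuous_norm.comp U₀.continuous) continuous_norm
    · intro x
      show ‖U₀ (x : H₁)‖ = ‖(x : H₁)‖
      rw [hU₀e]
      exact hTnorm x
  let Uiso : H₁ →ₗᵢ[ℂ] H₂ := ⟨U₀.toLinearMap, hU₀norm⟩
  -- surjectivity
  have hsurj : Function.Surjective Uiso := by
    have hclosed : IsClosed (Set.range Uiso) :=
      Uiso.isometry.isClosedEmbedding.isClosed_range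
    have hsub : (LinearMap.range φ₂ : Set H₂) ⊆ Set.range Uiso := by
      rintro _ ⟨a, rfl⟩
      exact ⟨φ₁ a, hU₀φ a⟩
    have hdense : Dense (Set.range Uiso) := hcyc₂.mono hsub
    have : Set.range Uiso = Set.univ := hclosed.closure_eq ▸ hdense.closure_eq
    intro y
    have : y ∈ Set.range Uiso := this ▸ Set.mem_univ y
    exact this
  refine ⟨LinearIsometryEquiv.ofSurjective Uiso hsurj, ?_, ?_⟩
  · show Uiso Ω₁ = Ω₂
    have h1 : φ₁ 1 = Ω₁ := by simp [hφ₁, map_one]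
    have h2 : φ₂ 1 = Ω₂ := by simp [hφ₂, map_one]
    show U₀ Ω₁ = Ω₂
    rw [← h1, hU₀φ, h2]
  · intro a x
    show U₀ (π₁ a x) = π₂ a (U₀ x)
    refine he_dense.induction_on x ?_ ?_
    · exact isClosed_eq (U₀.continuous.comp (π₁ a).continuous)
        ((π₂ a).continuous.comp U₀.continuous)
    · rintro ⟨_, b, rfl⟩
      show U₀ (π₁ a (φ₁ b)) = π₂ a (U₀ (φ₁ b))
      have : π₁ a (φ₁ b) = φ₁ (a * b) := by simp [hφ₁, map_mul]
      rw [this, hU₀φ, hU₀φ, hφ₂, hφ₂, map_mul]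
      rfl
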